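/- For all real N ≥ 2, integers K ≥ 2, real ε ≥ 0 and real δ with 0 ≤ δ ≤ δ2(ε), the multiplicative gap satisfies d1(ε,δ)/d2(ε,δ) ≤ (N - e^(-ε))/(N - 1), where d1(ε,δ) = 1 + 1/(N-1) - δ·e^ε/(N^(K-1)-1) and d2(ε,δ) = 1 + 1/(N·e^ε-1) - δ/((N·e^ε)^(K-1)-1), and δ2(ε) = ((N·e^ε)^(K-1)-1)/((N·e^ε-1)·(N·e^ε)^(K-1)). -/

import Mathlib

theorem stmt_4 (N ε δ : ℝ) (K : ℕ) (hN : 2 ≤ N) (hK : 2 ≤ K) (hε : 0 ≤ ε)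
    (hδ0 : 0 ≤ δ)
    (hδ2 : δ ≤ ((N * Real.exp ε)^(K-1) - 1)/((N * Real.exp ε - 1) * (N * Real.exp ε)^(K-1))) :
    (1 + 1/(N-1) - δ * Real.exp ε/(N^(K-1) - 1)) /
      (1 + 1/(N * Real.exp ε - 1) - δ/((N * Real.exp ε)^(K-1) - 1))
      ≤ (N - Real.exp (-ε))/(N - 1) := by
  rw [Real.exp_neg]
  set E := Real.exp ε with hEdef
  have hE : 1 ≤ E := Real.one_le_exp hε
  have hEpos : (0:ℝ) < E := by linarith
  have hNE : 2 ≤ N * E := le_trans hN (le_mul_of_one_le_right (by linarith) hE)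
  have hN1 : (0:ℝ) < N - 1 := by linarith
  have hNE1 : (0:ℝ) < N * E - 1 := by linarith
  have hK1 : 1 ≤ K - 1 := by omega
  have hA : N ≤ N ^ (K-1) := by
    calc N = N ^ 1 := (pow_one N).symm
    _ ≤ N ^ (K-1) := pow_le_pow_right₀ (by linarith) hK1
  have hB : N * E ≤ (N*E) ^ (K-1) := by
    calc N*E = (N*E) ^ 1 := (pow_one _).symm
    _ ≤ (N*E) ^ (K-1) := pow_le_pow_right₀ (by linarith) hK1
  have hA1 : (0:ℝ) < N ^ (K-1) - 1 := by linarith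
  have hB1 : (0:ℝ) < (N*E) ^ (K-1) - 1 := by linarith
  have hAB : N ^ (K-1) ≤ (N*E)^(K-1) :=
    pow_le_pow_left₀ (by linarith) (le_mul_of_one_le_right (by linarith) hE) _
  set A := N ^ (K-1)
  set B := (N*E) ^ (K-1)
  have hBpos : (0:ℝ) < B := by linarith
  -- d2 ≥ 1
  have hδB : δ / (B - 1) ≤ 1/(N*E-1) := by
    rw [div_le_div_iff₀ hB1 hNE1, one_mul]
    calc δ * (N*E-1) ≤ ((B - 1)/((N*E-1) * B)) * (N*E-1) :=
          mul_le_mul_of_nonneg_right hδ2 (le_of_lt hNE1)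
    _ ≤ B - 1 := by
        rw [div_mul_eq_mul_div, div_le_iff₀ (by positivity)]
        nlinarith [mul_nonneg (mul_nonneg hB1.le hNE1.le) hB1.le]
  have hd2 : (1:ℝ) ≤ 1 + 1/(N * E - 1) - δ/(B - 1) := by linarith
  have hd2pos : (0:ℝ) < 1 + 1/(N * E - 1) - δ/(B - 1) := by linarith
  rw [div_le_div_iff₀ hd2pos hN1]
  -- key inequality
  have h1 : (N*E - 1) * (A - 1) ≤ E^2 * (N-1) * (B - 1) := by
    have hNEE : (0:ℝ) ≤ N*E - E - 1 := by nlinarith [mul_le_mul_of_nonneg_left hN hEpos.le]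
    have h2 : N*E - 1 ≤ E^2 * (N-1) := by
      nlinarith [mul_nonneg (by linarith : (0:ℝ) ≤ E - 1) hNEE]
    calc (N*E - 1) * (A - 1) ≤ (E^2 * (N-1)) * (A - 1) :=
          mul_le_mul_of_nonneg_right h2 (le_of_lt hA1)
    _ ≤ (E^2 * (N-1)) * (B - 1) := by
          apply mul_le_mul_of_nonneg_left (by linarith) (by positivity)
  have hkey : (N - E⁻¹) * (δ/(B-1)) ≤ (N-1) * (δ*E/(A-1)) := by
    have hEne : E ≠ 0 := ne_of_gt hEpos
    rw [mul_div_assoc', mul_div_assoc', div_le_div_iff₀ hB1 hA1,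
      ← mul_le_mul_iff_of_pos_right hEpos]
    have e1 : (N - E⁻¹)*δ*(A-1)*E = δ*((N*E-1)*(A-1)) := by field_simp
    have e2 : (N-1)*(δ*E)*(B-1)*E = δ*(E^2*(N-1)*(B-1)) := by ring
    have := mul_le_mul_of_nonneg_left h1 hδ0
    linarith
  have h2 : (1 + 1/(N-1) - δ * E/(A - 1))*(N-1) = N - (N-1)*(δ*E/(A-1)) := by
    field_simp
    ring
  have h3 : (N - E⁻¹)*(1 + 1/(N*E-1) - δ/(B - 1)) = N - (N - E⁻¹)*(δ/(B-1)) := by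
    have hid : (N - E⁻¹) * (1 + 1/(N*E-1)) = N := by
      field_simp
      ring
    nlinarith [hid]
  linarith [hkey, h2, h3]
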